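/- With the notation of the tridiagonal matrix identity: let v_0, v_1 be linearly independent vectors in ℝ^2, b_1, ..., b_n integers, and define v_{i+1} = b_i v_i − v_{i−1}. Let A be the n×n tridiagonal matrix with diagonal −b_i and off-diagonal 1's. If v_{n+1} = −v_0, then det(A) = 0. -/
import Mathlib

/-- The `n × n` tridiagonal matrix with diagonal `-b 0, ..., -b (n-1)` and off-diagonal
entries `1`. -/
def triMat (b : ℕ → ℝ) (n : ℕ) : Matrix (Fin n) (Fin n) ℝ :=
  Matrix.of fun i j =>
    if (i : ℕ) = (j : ℕ) then -(b (i : ℕ))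
    else if (i : ℕ) + 1 = (j : ℕ) ∨ (j : ℕ) + 1 = (i : ℕ) then 1 else 0

lemma sum_ite_nat (n k : ℕ) (g : ℕ → ℝ) :
    (∑ j : Fin n, if (j : ℕ) = k then g (j : ℕ) else 0) = if k < n then g k else 0 := by
  rcases lt_or_ge k n with h | h
  · rw [if_pos h]
    rw [Finset.sum_eq_single_of_mem (⟨k, h⟩ : Fin n) (Finset.mem_univ _)]
    · simp
    · intro j _ hj
      rw [if_neg]
      intro hc
      exact hj (Fin.ext hc)
  · rw [if_neg (not_lt.mpr h)]
    apply Finset.sum_eq_zero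
    intro j _
    rw [if_neg]
    omega

theorem stmt_11 (n : ℕ) (hn : 1 ≤ n) (b : ℕ → ℤ) (v : ℕ → ℝ × ℝ)
    (hindep : LinearIndependent ℝ ![v 0, v 1])
    (hrec : ∀ i, 1 ≤ i → i ≤ n → v (i + 1) = (b i : ℝ) • v i - v (i - 1))
    (hcycle : v (n + 1) = -v 0) :
    (triMat (fun i => (b (i + 1) : ℝ)) n).det = 0 := by
  -- construct a linear functional with φ (v 0) = 0, φ (v 1) = 1
  have hcard : Fintype.card (Fin 2) = Module.finrank ℝ (ℝ × ℝ) := by simp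
  let B := basisOfLinearIndependentOfCardEqFinrank hindep hcard
  have hB : ⇑B = ![v 0, v 1] := coe_basisOfLinearIndependentOfCardEqFinrank hindep hcard
  let φ : (ℝ × ℝ) →ₗ[ℝ] ℝ := B.coord 1
  have hφ0 : φ (v 0) = 0 := by
    have : v 0 = B 0 := by rw [hB]; simp
    rw [this]
    simp [φ, Module.Basis.coord_apply, Module.Basis.repr_self]
  have hφ1 : φ (v 1) = 1 := by
    have : v 1 = B 1 := by rw [hB]; simp
    rw [this]
    simp [φ, Module.Basis.coord_apply, Module.Basis.repr_self]
  set c : ℕ → ℝ := fun k => φ (v k) with hc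
  have hc0 : c 0 = 0 := hφ0
  have hcn : c (n + 1) = 0 := by
    simp only [hc, hcycle, map_neg, hφ0, neg_zero]
  have hcrec : ∀ i, 1 ≤ i → i ≤ n → c (i + 1) = (b i : ℝ) * c i - c (i - 1) := by
    intro i h1 h2
    simp only [hc, hrec i h1 h2, map_sub, map_smul, smul_eq_mul]
  rw [← Matrix.exists_mulVec_eq_zero_iff]
  refine ⟨fun j => c ((j : ℕ) + 1), ?_, ?_⟩
  · intro h
    have := congrFun h ⟨0, hn⟩
    simp only [hc] at this
    rw [hφ1] at this  -- `c 1 = 1` vs 0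
    exact one_ne_zero this
  · funext i
    have key : (triMat (fun i => (b (i + 1) : ℝ)) n).mulVec (fun j => c ((j : ℕ) + 1)) i
        = c (i : ℕ) + (-(b ((i : ℕ) + 1) : ℝ)) * c ((i : ℕ) + 1) + c ((i : ℕ) + 2) := by
      unfold Matrix.mulVec dotProduct triMat
      simp only [Matrix.of_apply]
      have split : ∀ j : Fin n,
          (if (i : ℕ) = (j : ℕ) then -((b ((i : ℕ) + 1) : ℝ))
            else if (i : ℕ) + 1 = (j : ℕ) ∨ (j : ℕ) + 1 = (i : ℕ) then 1 else 0) * c ((j : ℕ) + 1)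
          = (if (j : ℕ) = (i : ℕ) then (-(b ((i : ℕ) + 1) : ℝ)) * c ((j : ℕ) + 1) else 0)
            + (if (j : ℕ) = (i : ℕ) + 1 then c ((j : ℕ) + 1) else 0)
            + (if (j : ℕ) + 1 = (i : ℕ) then c ((j : ℕ) + 1) else 0) := by
        intro j
        rcases Nat.lt_trichotomy (i : ℕ) (j : ℕ) with h | h | h
        · by_cases h2 : (i : ℕ) + 1 = (j : ℕ)
          · rw [if_neg (by omega), if_pos (by omega), if_neg (by omega), if_pos (by omega),
              if_neg (by omega)]
            ring
          · rw [if_neg (by omega), if_neg (by omega), if_neg (by omega), if_neg (by omega),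
              if_neg (by omega)]
            ring
        · rw [if_pos h, if_pos (by omega), if_neg (by omega), if_neg (by omega)]
          ring
        · by_cases h2 : (j : ℕ) + 1 = (i : ℕ)
          · rw [if_neg (by omega), if_pos (by omega), if_neg (by omega), if_neg (by omega),
              if_pos h2]
            ring
          · rw [if_neg (by omega), if_neg (by omega), if_neg (by omega), if_neg (by omega),
              if_neg (by omega)]
            ring
      rw [Finset.sum_congr rfl (fun j _ => split j)]
      rw [Finset.sum_add_distrib, Finset.sum_add_distrib]
      rw [sum_ite_nat n (i : ℕ) (fun m => (-(b ((i : ℕ) + 1) : ℝ)) * c (m + 1)),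
        sum_ite_nat n ((i : ℕ) + 1) (fun m => c (m + 1))]
      have last : (∑ j : Fin n, if (j : ℕ) + 1 = (i : ℕ) then c ((j : ℕ) + 1) else 0)
          = c (i : ℕ) := by
        rcases Nat.eq_zero_or_pos (i : ℕ) with h | h
        · rw [h, hc0]
          apply Finset.sum_eq_zero
          intro j _
          rw [if_neg (by omega)]
        · have : ∀ j : Fin n, (if (j : ℕ) + 1 = (i : ℕ) then c ((j : ℕ) + 1) else 0)
              = (if (j : ℕ) = (i : ℕ) - 1 then c ((j : ℕ) + 1) else 0) := by
            intro j
            by_cases hj : (j : ℕ) + 1 = (i : ℕ)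
            · rw [if_pos hj, if_pos (by omega)]
            · rw [if_neg hj, if_neg (by omega)]
          rw [Finset.sum_congr rfl (fun j _ => this j),
            sum_ite_nat n ((i : ℕ) - 1) (fun m => c (m + 1)),
            if_pos (by omega)]
          congr 1
          omega
      rw [last, if_pos i.isLt]
      by_cases h : (i : ℕ) + 1 < n
      · rw [if_pos h]; ring
      · rw [if_neg h]
        have : (i : ℕ) + 2 = n + 1 := by omega
        rw [this, hcn]
        ring
    rw [key]
    have := hcrec ((i : ℕ) + 1) (by omega) (by omega)
    simp only [Nat.add_sub_cancel] at this
    rw [show (i : ℕ) + 1 + 1 = (i : ℕ) + 2 from rfl] at this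
    rw [this]
    simp only [Pi.zero_apply]
    ring
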